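/- Let X and Y be compact Hausdorff spaces and let h_0, h_1 : X → Y be continuous maps that are homotopic. Then the induced maps I_f(h_0), I_f(h_1) : I_f(X) → I_f(Y) are homotopic; explicitly, if h : X × [0,1] → Y is a homotopy with h(·,0) = h_0 and h(·,1) = h_1, then the map H : I_f(X) × [0,1] → I_f(Y) defined by H(⊕_{i=1}^n λ_i ⊙ δ_{x_i}, t) = ⊕_{i=1}^n λ_i ⊙ δ_{h(x_i,t)} is a continuous homotopy between I_f(h_0) and I_f(h_1). -/

import Mathlib

set_option maxHeartbeats 1000000


open Real Set Topology

/-- The Dirac measure `δ_x` on `X`, as a functional on `C(X, ℝ)`: `δ_x(φ) = φ(x)`. -/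
def dirac (X : Type*) [TopologicalSpace X] (x : X) : C(X, ℝ) → ℝ := fun φ => φ x

/-- The max-plus combination `⊕_{i=1}^n λ_i ⊙ δ_{x_i}`, i.e. the functional
`φ ↦ max_{1 ≤ i ≤ n} (λ_i + φ(x_i))`. -/
noncomputable def maxPlus {X : Type*} [TopologicalSpace X] {n : ℕ}
    (lam : Fin n → ℝ) (x : Fin n → X) : C(X, ℝ) → ℝ :=
  fun φ => ⨆ i, (lam i + φ (x i))

/-- `μ : C(X, ℝ) → ℝ` is an idempotent probability measure:
(1) `μ(c_λ) = λ` for constant functions; (2) `μ(λ + φ) = λ + μ(φ)`;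
(3) `μ(max(φ, ψ)) = max(μ(φ), μ(ψ))`. -/
def IsIPM {X : Type*} [TopologicalSpace X] (μ : C(X, ℝ) → ℝ) : Prop :=
  (∀ c : ℝ, μ (ContinuousMap.const X c) = c) ∧
  (∀ (c : ℝ) (φ : C(X, ℝ)), μ (ContinuousMap.const X c + φ) = c + μ φ) ∧
  (∀ φ ψ : C(X, ℝ), μ (φ ⊔ ψ) = max (μ φ) (μ ψ))

/-- Membership in `I_ω(X)`: idempotent probability measures with finite support, i.e.
`μ = ⊕_{i=1}^n λ_i ⊙ δ_{x_i}` with `x_i` pairwise distinct, `λ_i ≤ 0` and `max_i λ_i = 0`. -/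
def IsFS {X : Type*} [TopologicalSpace X] (μ : C(X, ℝ) → ℝ) : Prop :=
  ∃ n : ℕ, 0 < n ∧ ∃ (x : Fin n → X) (lam : Fin n → ℝ),
    Function.Injective x ∧ (∀ i, lam i ≤ 0) ∧ (∃ i, lam i = 0) ∧ μ = maxPlus lam x

/-- Membership in `I_f(X)`: `μ = ⊕_{i=1}^n λ_i ⊙ δ_{x_i}` with `x_i` pairwise distinct,
a unique index `i₀` with `λ_{i₀} = 0`, and `λ_i ≤ -ln(n+1)` for every `i ≠ i₀`. -/
def IsIf {X : Type*} [TopologicalSpace X] (μ : C(X, ℝ) → ℝ) : Prop :=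
  ∃ n : ℕ, 0 < n ∧ ∃ (x : Fin n → X) (lam : Fin n → ℝ) (i0 : Fin n),
    Function.Injective x ∧ lam i0 = 0 ∧
    (∀ i, i ≠ i0 → lam i ≤ -Real.log (n + 1)) ∧ μ = maxPlus lam x

/-- The pushforward `I_f(f)(μ)(ψ) = μ(ψ ∘ f)`. -/
def push {X Y : Type*} [TopologicalSpace X] [TopologicalSpace Y]
    (f : C(X, Y)) (μ : C(X, ℝ) → ℝ) : C(Y, ℝ) → ℝ :=
  fun ψ => μ (ψ.comp f)

-- merging lemma: maxPlus with possibly non-injective points is still IsIf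
lemma isIf_maxPlus {Y : Type*} [TopologicalSpace Y] {n : ℕ}
    (y : Fin n → Y) (lam : Fin n → ℝ) (i0 : Fin n) (hl0 : lam i0 = 0)
    (hle : ∀ i, i ≠ i0 → lam i ≤ -Real.log (n + 1)) :
    IsIf (maxPlus lam y) := by
  classical
  haveI : Nonempty (Fin n) := ⟨i0⟩
  have hlam_nonpos : ∀ i, lam i ≤ 0 := by
    intro i
    by_cases h : i = i0
    · simp [h, hl0]
    · refine (hle i h).trans ?_
      simp only [neg_nonpos]
      exact Real.log_nonneg (by simp)
  set s : Finset Y := Finset.image y Finset.univ with hs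
  set m : ℕ := s.card with hm
  have hmem : ∀ i, y i ∈ s := fun i => Finset.mem_image_of_mem y (Finset.mem_univ i)
  have hmn : m ≤ n := le_trans (Finset.card_image_le) (by simp)
  have e : Fin m ≃ {a // a ∈ s} := (Finset.equivFin s).symm.trans (Equiv.refl _)
  set x' : Fin m → Y := fun j => (e j : Y) with hx'
  have hx'inj : Function.Injective x' := fun a b h => e.injective (Subtype.ext h)
  have hx'mem : ∀ j, x' j ∈ s := fun j => (e j).2
  have fibNE : ∀ j : Fin m, ((Finset.univ.filter (fun i => y i = x' j)) : Finset (Fin n)).Nonempty := by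
    intro j
    obtain ⟨i, _, hi⟩ := Finset.mem_image.mp (hx'mem j)
    exact ⟨i, Finset.mem_filter.mpr ⟨Finset.mem_univ i, hi⟩⟩
  set lam' : Fin m → ℝ := fun j => (Finset.univ.filter (fun i => y i = x' j)).sup' (fibNE j) lam with hlam'
  set j0 : Fin m := e.symm ⟨y i0, hmem i0⟩ with hj0
  have hxj0 : x' j0 = y i0 := by
    simp only [hx', hj0, Equiv.apply_symm_apply]
  have hm0 : 0 < m := Fin.pos_iff_nonempty.mpr ⟨j0⟩
  have hfib0 : ∀ j i, i ∈ Finset.univ.filter (fun i => y i = x' j) → i = i0 → j = j0 := by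
    intro j i hi hii
    have : y i = x' j := (Finset.mem_filter.mp hi).2
    apply hx'inj
    rw [hxj0, ← hii, this]
  refine ⟨m, hm0, x', lam', j0, hx'inj, ?_, ?_, ?_⟩
  · -- lam' j0 = 0
    apply le_antisymm
    · exact Finset.sup'_le _ _ fun i _ => hlam_nonpos i
    · rw [← hl0]
      exact Finset.le_sup' lam (Finset.mem_filter.mpr ⟨Finset.mem_univ i0, hxj0.symm⟩)
  · -- bound
    intro j hj
    apply Finset.sup'_le
    intro i hi
    have hii0 : i ≠ i0 := fun h => hj (hfib0 j i hi h)
    refine (hle i hii0).trans ?_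
    apply neg_le_neg
    apply Real.log_le_log (by positivity)
    have : (m : ℝ) ≤ n := Nat.cast_le.mpr hmn
    linarith
  · -- function equality
    funext φ
    have hbdd : ∀ {k : ℕ} (f : Fin k → ℝ), BddAbove (Set.range f) :=
      fun f => Set.Finite.bddAbove (Set.finite_range f)
    apply le_antisymm
    · apply ciSup_le
      intro i
      set j : Fin m := e.symm ⟨y i, hmem i⟩ with hj
      have hxj : x' j = y i := by simp only [hx', hj, Equiv.apply_symm_apply]
      have h1 : lam i ≤ lam' j :=
        Finset.le_sup' lam (Finset.mem_filter.mpr ⟨Finset.mem_univ i, hxj.symm⟩)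
      calc lam i + φ (y i) ≤ lam' j + φ (x' j) := by rw [hxj]; linarith
        _ ≤ ⨆ j, (lam' j + φ (x' j)) := le_ciSup (hbdd fun j => lam' j + φ (x' j)) j
    · haveI : Nonempty (Fin m) := ⟨j0⟩
      apply ciSup_le
      intro j
      obtain ⟨i, hi, hieq⟩ := Finset.exists_mem_eq_sup' (fibNE j) lam
      have hyi : y i = x' j := (Finset.mem_filter.mp hi).2
      calc lam' j + φ (x' j) = lam i + φ (y i) := by rw [show lam' j = lam i from hieq, hyi]
        _ ≤ ⨆ i, (lam i + φ (y i)) := le_ciSup (hbdd fun i => lam i + φ (y i)) i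

-- Lipschitz property
lemma isIf_lip {X : Type*} [TopologicalSpace X] [CompactSpace X] {μ : C(X, ℝ) → ℝ}
    (h : IsIf μ) (φ ψ : C(X, ℝ)) : dist (μ φ) (μ ψ) ≤ dist φ ψ := by
  obtain ⟨n, hn, x, lam, i0, -, -, -, rfl⟩ := h
  haveI : Nonempty (Fin n) := ⟨i0⟩
  have hbdd : ∀ f : Fin n → ℝ, BddAbove (Set.range f) :=
    fun f => Set.Finite.bddAbove (Set.finite_range f)
  have key : ∀ φ ψ : C(X, ℝ), maxPlus lam x φ ≤ maxPlus lam x ψ + dist φ ψ := by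
    intro φ ψ
    simp only [maxPlus]
    apply ciSup_le
    intro i
    have h1 : φ (x i) - ψ (x i) ≤ dist φ ψ :=
      (le_abs_self _).trans (by rw [← Real.dist_eq]; exact ContinuousMap.dist_apply_le_dist _)
    calc lam i + φ (x i) ≤ (lam i + ψ (x i)) + dist φ ψ := by linarith
      _ ≤ maxPlus lam x ψ + dist φ ψ := add_le_add_left (le_ciSup (hbdd fun i => lam i + ψ (x i)) i) _
  rw [Real.dist_eq, abs_sub_le_iff]
  constructor <;> linarith [key φ ψ, key ψ φ, dist_comm φ ψ]


/-- if `h₀, h₁ : X → Y` are homotopic continuous maps, with homotopy `hh`,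
then `I_f(h₀)` and `I_f(h₁)` are homotopic; explicitly, the map
`H(⊕_{i=1}^n λ_i ⊙ δ_{x_i}, t) = ⊕_{i=1}^n λ_i ⊙ δ_{hh(x_i,t)}` is a continuous homotopy
from `I_f(h₀)` to `I_f(h₁)` through `I_f(Y)`. -/
theorem stmt13 {X Y : Type*} [TopologicalSpace X] [CompactSpace X] [T2Space X]
    [TopologicalSpace Y] [CompactSpace Y] [T2Space Y]
    (h0 h1 : C(X, Y)) (hh : ContinuousMap.Homotopy h0 h1) :
    ∃ H : {μ : C(X, ℝ) → ℝ // IsIf μ} → unitInterval → C(Y, ℝ) → ℝ,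
      Continuous (fun p : {μ : C(X, ℝ) → ℝ // IsIf μ} × unitInterval => H p.1 p.2) ∧
      (∀ μ t, IsIf (H μ t)) ∧
      (∀ μ, H μ 0 = push h0 μ.1) ∧
      (∀ μ, H μ 1 = push h1 μ.1) ∧
      (∀ (n : ℕ), 0 < n → ∀ (x : Fin n → X) (lam : Fin n → ℝ),
        ∀ hμ : IsIf (maxPlus lam x), ∀ t : unitInterval,
          H ⟨maxPlus lam x, hμ⟩ t = maxPlus lam (fun i => hh (t, x i))) := by
  set G : C(unitInterval, C(X, Y)) := hh.toContinuousMap.curry with hG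
  have hGapp : ∀ (t : unitInterval) (x : X), G t x = hh (t, x) := fun t x => rfl
  refine ⟨fun μ t ψ => μ.1 (ψ.comp (G t)), ?_, ?_, ?_, ?_, ?_⟩
  · -- continuity
    apply continuous_pi
    intro ψ
    rw [continuous_iff_continuousAt]
    rintro ⟨μ₀, t₀⟩
    have hΦ : Continuous (fun t : unitInterval => ψ.comp (G t)) :=
      (ContinuousMap.continuous_postcomp ψ).comp G.continuous
    rw [ContinuousAt, Metric.tendsto_nhds]
    intro ε hε
    have A : ∀ᶠ t in 𝓝 t₀, dist (ψ.comp (G t)) (ψ.comp (G t₀)) < ε/2 :=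
      Metric.tendsto_nhds.mp (hΦ.tendsto t₀) (ε/2) (by linarith)
    have hev : Continuous (fun μ' : {μ : C(X, ℝ) → ℝ // IsIf μ} => μ'.1 (ψ.comp (G t₀))) :=
      (continuous_apply _).comp continuous_subtype_val
    have B : ∀ᶠ μ' in 𝓝 μ₀, dist (μ'.1 (ψ.comp (G t₀))) (μ₀.1 (ψ.comp (G t₀))) < ε/2 :=
      Metric.tendsto_nhds.mp (hev.tendsto μ₀) (ε/2) (by linarith)
    rw [nhds_prod_eq]
    filter_upwards [B.prod_mk A]
    rintro ⟨μ', t⟩ ⟨hB, hA⟩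
    calc dist (μ'.1 (ψ.comp (G t))) (μ₀.1 (ψ.comp (G t₀)))
        ≤ dist (μ'.1 (ψ.comp (G t))) (μ'.1 (ψ.comp (G t₀)))
          + dist (μ'.1 (ψ.comp (G t₀))) (μ₀.1 (ψ.comp (G t₀))) := dist_triangle _ _ _
      _ ≤ dist (ψ.comp (G t)) (ψ.comp (G t₀))
          + dist (μ'.1 (ψ.comp (G t₀))) (μ₀.1 (ψ.comp (G t₀))) :=
            add_le_add_left (isIf_lip μ'.2 _ _) _
      _ < ε/2 + ε/2 := add_lt_add hA hB
      _ = ε := by ring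
  · -- IsIf
    intro μ t
    obtain ⟨n, hn, x, lam, i0, hinj, hl0, hle, hrep⟩ := μ.2
    have : (fun ψ => μ.1 (ψ.comp (G t))) = maxPlus lam (fun i => G t (x i)) := by
      funext ψ; rw [hrep]; rfl
    show IsIf (fun ψ => μ.1 (ψ.comp (G t)))
    rw [this]
    exact isIf_maxPlus _ lam i0 hl0 hle
  · intro μ
    funext ψ
    have : ψ.comp (G 0) = ψ.comp h0 := by
      ext x; simp [hGapp]
    show μ.1 (ψ.comp (G 0)) = μ.1 (ψ.comp h0)
    rw [this]
  · intro μ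
    funext ψ
    have : ψ.comp (G 1) = ψ.comp h1 := by
      ext x; simp [hGapp]
    show μ.1 (ψ.comp (G 1)) = μ.1 (ψ.comp h1)
    rw [this]
  · intro n hn x lam hμ t
    funext ψ
    rfl
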